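/- Suppose the grading of L satisfies L_i = 0 for i < −q and for i > s, where s ≥ q ≥ 1; suppose L_j = (ad L_{−1})^{s−j} L_s for all −q ≤ j < s; suppose condition (F1) holds; and suppose (ad L_{−q})^2 L ≠ 0, i.e. [L_{−q}, [L_{−q}, L]] ≠ 0. Then [L_{−q}, [L_{−q}, L_q]] ≠ 0. (Corollary 2.11.) -/

import Mathlib

set_option linter.unusedSectionVars false
set_option linter.unusedVariables false

/- Graded Lie algebra setting: `F` a field of characteristic 3, `A` a
finite-dimensional Lie algebra over `F`, with a `ℤ`-grading `L : ℤ → Submodule F A`. -/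

namespace GradedLie

variable {F A : Type*} [Field F] [CharP F 3] [LieRing A] [LieAlgebra F A]

/-- The linear span of all brackets `⁅u, v⁆` with `u ∈ U`, `v ∈ V`. -/
def bSpan (U V : Submodule F A) : Submodule F A :=
  Submodule.span F {z | ∃ u ∈ U, ∃ v ∈ V, z = ⁅u, v⁆}

/-- `M` is an irreducible `L0`-module under the adjoint action:
`M ≠ 0` and the only `L0`-submodules of `M` are `0` and `M`. -/
def IsIrred (L0 M : Submodule F A) : Prop :=
  M ≠ ⊥ ∧ ∀ V ≤ M, bSpan L0 V ≤ V → V = ⊥ ∨ V = M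

/-- `adPow U V k = (ad U)^k V`, the `k`-fold iterated bracket span. -/
def adPow (U V : Submodule F A) : ℕ → Submodule F A
  | 0 => V
  | (k + 1) => bSpan U (adPow U V k)

lemma lie_mem_bSpan {U V : Submodule F A} {u v : A} (hu : u ∈ U) (hv : v ∈ V) :
    ⁅u, v⁆ ∈ bSpan U V := Submodule.subset_span ⟨u, hu, v, hv, rfl⟩

lemma bSpan_le {U V W : Submodule F A} (h : ∀ u ∈ U, ∀ v ∈ V, ⁅u, v⁆ ∈ W) :
    bSpan U V ≤ W := Submodule.span_le.2 (by rintro z ⟨u, hu, v, hv, rfl⟩; exact h u hu v hv)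

lemma bSpan_mono {U V V' : Submodule F A} (h : V ≤ V') : bSpan U V ≤ bSpan U V' :=
  bSpan_le fun u hu v hv => lie_mem_bSpan hu (h hv)

lemma bSpan_bot {U : Submodule F A} : bSpan U (⊥ : Submodule F A) = ⊥ := by
  refine le_bot_iff.1 (bSpan_le ?_)
  intro u _ v hv
  simp only [Submodule.mem_bot] at hv ⊢
  simp [hv]

lemma bSpan_comm {U W V : Submodule F A}
    (h : ∀ u ∈ U, ∀ w ∈ W, ⁅u, w⁆ = 0) :
    bSpan U (bSpan W V) ≤ bSpan W (bSpan U V) := by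
  refine bSpan_le ?_
  intro u hu t ht
  induction ht using Submodule.span_induction with
  | mem z hz =>
      obtain ⟨w, hw, v, hv, rfl⟩ := hz
      have : ⁅u, ⁅w, v⁆⁆ = ⁅w, ⁅u, v⁆⁆ := by
        rw [leibniz_lie, h u hu w hw, zero_lie, zero_add]
      rw [this]
      exact lie_mem_bSpan hw (lie_mem_bSpan hu hv)
  | zero => simp
  | add x y _ _ hx hy => rw [lie_add]; exact add_mem hx hy
  | smul c x _ hx => rw [lie_smul]; exact Submodule.smul_mem _ c hx

lemma bSpan_iSup_le {ι : Type*} {U : Submodule F A} {V : ι → Submodule F A} :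
    bSpan U (⨆ i, V i) ≤ ⨆ i, bSpan U (V i) := by
  refine bSpan_le ?_
  intro u hu v hv
  refine Submodule.iSup_induction (motive := fun w => ⁅u, w⁆ ∈ ⨆ i, bSpan U (V i)) V hv
    (fun i x hx => ?_) ?_ ?_
  · exact le_iSup (fun i => bSpan U (V i)) i (lie_mem_bSpan hu hx)
  · simp
  · intro x y hx hy; rw [lie_add]; exact add_mem hx hy

/-- Corollary 2.11: if `L j = (ad L (-1))^(s-j) (L s)` for `-q ≤ j < s`, (F1)
holds, and `(ad L (-q))^2 L ≠ 0`, then `[L (-q), [L (-q), L q]] ≠ 0`. -/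
theorem corollary_2_11
    [FiniteDimensional F A]
    (L : ℤ → Submodule F A)
    (hdecomp : DirectSum.IsInternal L)
    (hgrade : ∀ i j : ℤ, ∀ x ∈ L i, ∀ y ∈ L j, ⁅x, y⁆ ∈ L (i + j))
    (q s : ℤ) (hq : 1 ≤ q) (hs : q ≤ s)
    (hbound : ∀ i : ℤ, i < -q ∨ s < i → L i = ⊥)
    (hbot : L (-q) ≠ ⊥)
    (hLj : ∀ j : ℤ, -q ≤ j → j < s → L j = adPow (L (-1)) (L s) (s - j).toNat)
    (hF1 : ∀ i : ℤ, -q < i → ∀ x ∈ L i, x ≠ 0 → ∃ y ∈ L (-1), ⁅y, x⁆ ≠ 0)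
    (hne : bSpan (L (-q)) (bSpan (L (-q)) (⊤ : Submodule F A)) ≠ ⊥) :
    bSpan (L (-q)) (bSpan (L (-q)) (L q)) ≠ ⊥ := by
  set Q := L (-q) with hQ
  -- grading bound: bSpan Q (bSpan Q (L i)) ≤ L (i - 2*q)
  have hgr : ∀ i j : ℤ, bSpan (L i) (L j) ≤ L (i + j) := fun i j =>
    bSpan_le fun u hu v hv => hgrade i j u hu v hv
  have hM : ∀ i : ℤ, bSpan Q (bSpan Q (L i)) ≤ L (i - 2 * q) := by
    intro i
    have h1 : bSpan Q (L i) ≤ L (-q + i) := hgr (-q) i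
    calc bSpan Q (bSpan Q (L i)) ≤ bSpan Q (L (-q + i)) := bSpan_mono h1
      _ ≤ L (-q + (-q + i)) := hgr _ _
      _ = L (i - 2 * q) := by ring_nf
  -- commuting: [L(-1), L(-q)] = 0
  have hcm : ∀ u ∈ L (-1), ∀ w ∈ Q, ⁅u, w⁆ = 0 := by
    intro u hu w hw
    have : ⁅u, w⁆ ∈ L (-1 + -q) := hgrade _ _ u hu w hw
    rwa [hbound (-1 + -q) (Or.inl (by omega)), Submodule.mem_bot] at this
  -- P i predicate
  have hex : ∃ i : ℤ, bSpan Q (bSpan Q (L i)) ≠ ⊥ := by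
    by_contra h
    push_neg at h
    apply hne
    have htop : (⊤ : Submodule F A) = ⨆ i, L i := hdecomp.submodule_iSup_eq_top.symm
    have : bSpan Q (bSpan Q (⊤ : Submodule F A)) ≤ ⨆ i, bSpan Q (bSpan Q (L i)) := by
      rw [htop]
      calc bSpan Q (bSpan Q (⨆ i, L i)) ≤ bSpan Q (⨆ i, bSpan Q (L i)) :=
            bSpan_mono bSpan_iSup_le
        _ ≤ ⨆ i, bSpan Q (bSpan Q (L i)) := bSpan_iSup_le
    have hsup : (⨆ i, bSpan Q (bSpan Q (L i))) = ⊥ := by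
      simp only [iSup_eq_bot]; exact h
    exact le_bot_iff.1 (hsup ▸ this)
  obtain ⟨i, hi⟩ := hex
  -- q ≤ i
  have hiq : q ≤ i := by
    by_contra h
    push_neg at h
    have : L (i - 2 * q) = ⊥ := hbound _ (Or.inl (by omega))
    exact hi (le_bot_iff.1 (this ▸ hM i))
  -- i ≤ s
  have his : i ≤ s := by
    by_contra h
    push_neg at h
    have : L i = ⊥ := hbound _ (Or.inr h)
    apply hi
    rw [this, bSpan_bot, bSpan_bot]
  -- descent step
  have hstep : ∀ j : ℤ, q < j → bSpan Q (bSpan Q (L j)) ≠ ⊥ →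
      bSpan Q (bSpan Q (L (j - 1))) ≠ ⊥ := by
    intro j hj hPj
    obtain ⟨x, hxM, hx0⟩ := Submodule.exists_mem_ne_zero_of_ne_bot hPj
    have hxL : x ∈ L (j - 2 * q) := hM j hxM
    obtain ⟨y, hy, hyx⟩ := hF1 (j - 2 * q) (by omega) x hxL hx0
    have hmem : ⁅y, x⁆ ∈ bSpan (L (-1)) (bSpan Q (bSpan Q (L j))) :=
      lie_mem_bSpan hy hxM
    have hle : bSpan (L (-1)) (bSpan Q (bSpan Q (L j))) ≤
        bSpan Q (bSpan Q (L (j - 1))) := by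
      calc bSpan (L (-1)) (bSpan Q (bSpan Q (L j)))
          ≤ bSpan Q (bSpan (L (-1)) (bSpan Q (L j))) := bSpan_comm hcm
        _ ≤ bSpan Q (bSpan Q (bSpan (L (-1)) (L j))) := bSpan_mono (bSpan_comm hcm)
        _ ≤ bSpan Q (bSpan Q (L (j - 1))) := by
            refine bSpan_mono (bSpan_mono ?_)
            have := hgr (-1) j
            rwa [show (-1 : ℤ) + j = j - 1 by ring] at this
    intro hb
    have : ⁅y, x⁆ ∈ (⊥ : Submodule F A) := hb ▸ hle hmem
    exact hyx (by simpa using this)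
  -- downward induction
  have key : ∀ n : ℕ, ∀ j : ℤ, j = q + n → bSpan Q (bSpan Q (L j)) ≠ ⊥ →
      bSpan Q (bSpan Q (L q)) ≠ ⊥ := by
    intro n
    induction n with
    | zero => intro j hj hP; rwa [show j = q by omega] at hP
    | succ n ih =>
        intro j hj hP
        have := hstep j (by omega) hP
        exact ih (j - 1) (by omega) this
  exact key (i - q).toNat i (by omega) hi

end GradedLie
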